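/- Let n ≥ 1 and let S = {A_1, …, A_k} be a Sperner family on {1,…,n} with k ≥ 2, |A_j| ≥ 2 for every j = 1, …, k, and ⋂_{j=1}^k A_j = ∅. Then the module h_S has exactly one fixed point ω in the open interval (0,1) (i.e., exactly one ω ∈ (0,1) with h_S(ω) = ω), and this fixed point is repellent: h_S′(ω) > 1. -/

import Mathlib

open MeasureTheory

/-- The Sperner statistic of a family `S` of subsets of `{1,…,n}`:
`H_S(x) = max_{A ∈ S} min_{i ∈ A} x_i`. -/
noncomputable def spernerStat {n : ℕ} (S : Finset (Finset (Fin n))) (hS : S.Nonempty)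
    (hne : ∀ A ∈ S, A.Nonempty) (x : Fin n → ℝ) : ℝ :=
  S.attach.sup' (Finset.attach_nonempty_iff.mpr hS)
    (fun A => A.1.inf' (hne A.1 A.2) x)

/- The module of a Sperner family:
`h_S(t) = Σ_{ε ∈ {0,1}^n, H_S(ε)=0} t^{z(ε)} (1−t)^{n−z(ε)}`, where `z(ε)` is the
number of zero coordinates of `ε`. -/
open scoped Classical in
noncomputable def spernerModule {n : ℕ} (S : Finset (Finset (Fin n))) (hS : S.Nonempty)
    (hne : ∀ A ∈ S, A.Nonempty) (t : ℝ) : ℝ :=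
  ∑ ε : Fin n → Bool,
    if spernerStat S hS hne (fun i => if ε i then 1 else 0) = 0 then
      t ^ (Finset.univ.filter fun i => ε i = false).card *
        (1 - t) ^ (n - (Finset.univ.filter fun i => ε i = false).card)
    else 0



/-- number of `true` coordinates -/
def cnt {n : ℕ} (x : Fin n → Bool) : ℕ := (Finset.univ.filter fun i => x i = true).card

noncomputable def pgf (n : ℕ) (g : (Fin n → Bool) → Bool) (t : ℝ) : ℝ :=
  ∑ x : Fin n → Bool, if g x then t ^ cnt x * (1 - t) ^ (n - cnt x) else 0

lemma cnt_le {n : ℕ} (x : Fin n → Bool) : cnt x ≤ n := by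
  classical
  have := Finset.card_filter_le (Finset.univ : Finset (Fin n)) (fun i => x i = true)
  simpa [cnt] using this

lemma cnt_cons {n : ℕ} (b : Bool) (y : Fin n → Bool) :
    cnt (Fin.cons b y) = (if b = true then 1 else 0) + cnt y := by
  classical
  unfold cnt
  rw [Finset.card_filter, Finset.card_filter, Fin.sum_univ_succ]
  simp [Fin.cons_succ]

lemma pgf_cons (n : ℕ) (g : (Fin (n+1) → Bool) → Bool) (t : ℝ) :
    pgf (n+1) g t = (1-t) * pgf n (fun y => g (Fin.cons false y)) t
      + t * pgf n (fun y => g (Fin.cons true y)) t := by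
  classical
  unfold pgf
  rw [← Equiv.sum_comp (Fin.consEquiv (fun _ => Bool))
    (fun x => if g x then t ^ cnt x * (1 - t) ^ (n+1 - cnt x) else 0)]
  rw [Fintype.sum_prod_type, Fintype.sum_bool]
  rw [Finset.mul_sum, Finset.mul_sum, add_comm]
  congr 1
  · refine Finset.sum_congr rfl fun y _ => ?_
    beta_reduce
    have hc : cnt (Fin.cons false y) = cnt y := by rw [cnt_cons]; simp
    have he : (Fin.consEquiv (fun _ => Bool)) (false, y) = Fin.cons false y := rfl
    rw [he, hc]
    by_cases h : g (Fin.cons false y) = true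
    · rw [if_pos h, if_pos h]
      have h2 : n + 1 - cnt y = (n - cnt y) + 1 := by have := cnt_le y; omega
      rw [h2, pow_succ]
      ring
    · rw [if_neg h, if_neg h]; ring
  · refine Finset.sum_congr rfl fun y _ => ?_
    beta_reduce
    have hc : cnt (Fin.cons true y) = cnt y + 1 := by rw [cnt_cons]; simp; ring
    have he : (Fin.consEquiv (fun _ => Bool)) (true, y) = Fin.cons true y := rfl
    rw [he, hc]
    by_cases h : g (Fin.cons true y) = true
    · rw [if_pos h, if_pos h]
      have h2 : n + 1 - (cnt y + 1) = n - cnt y := by omega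
      rw [h2, pow_succ]
      ring
    · rw [if_neg h, if_neg h]; ring

lemma w_pos {t : ℝ} (h0 : 0 < t) (h1 : t < 1) (a b : ℕ) :
    0 < t ^ a * (1 - t) ^ b :=
  mul_pos (pow_pos h0 a) (pow_pos (by linarith) b)

lemma w_nonneg {t : ℝ} (h0 : 0 ≤ t) (h1 : t ≤ 1) (a b : ℕ) :
    0 ≤ t ^ a * (1 - t) ^ b :=
  mul_nonneg (pow_nonneg h0 a) (pow_nonneg (by linarith) b)

lemma pgf_nonneg {n : ℕ} (g : (Fin n → Bool) → Bool) {t : ℝ} (h0 : 0 ≤ t) (h1 : t ≤ 1) :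
    0 ≤ pgf n g t := by
  refine Finset.sum_nonneg fun x _ => ?_
  split
  · exact w_nonneg h0 h1 _ _
  · exact le_refl 0

lemma pgf_mono {n : ℕ} {g g' : (Fin n → Bool) → Bool}
    (hgg : ∀ x, g x = true → g' x = true) {t : ℝ} (h0 : 0 ≤ t) (h1 : t ≤ 1) :
    pgf n g t ≤ pgf n g' t := by
  refine Finset.sum_le_sum fun x _ => ?_
  by_cases h : g x = true
  · rw [if_pos h, if_pos (hgg x h)]
  · rw [if_neg h]
    split
    · exact w_nonneg h0 h1 _ _
    · exact le_refl 0

lemma pgf_true (n : ℕ) (t : ℝ) : pgf n (fun _ => true) t = 1 := by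
  induction n with
  | zero =>
    unfold pgf
    rw [Fintype.sum_subsingleton (a := fun i => i.elim0)]
    · simp [cnt]
  | succ m ih =>
    rw [pgf_cons, ih]
    ring

lemma pgf_le_one {n : ℕ} (g : (Fin n → Bool) → Bool) {t : ℝ} (h0 : 0 ≤ t) (h1 : t ≤ 1) :
    pgf n g t ≤ 1 :=
  le_of_le_of_eq (pgf_mono (fun _ _ => rfl) h0 h1) (pgf_true n t)

lemma one_sub_pgf {n : ℕ} (g : (Fin n → Bool) → Bool) (t : ℝ) :
    1 - pgf n g t = ∑ x : Fin n → Bool,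
      if g x = false then t ^ cnt x * (1 - t) ^ (n - cnt x) else 0 := by
  have key : pgf n g t + (∑ x : Fin n → Bool,
      if g x = false then t ^ cnt x * (1 - t) ^ (n - cnt x) else 0)
      = pgf n (fun _ => true) t := by
    unfold pgf
    rw [← Finset.sum_add_distrib]
    refine Finset.sum_congr rfl fun x _ => ?_
    cases h : g x <;> simp [h]
  rw [pgf_true] at key
  linarith

lemma pgf_eq_zero {n : ℕ} {g : (Fin n → Bool) → Bool} {t : ℝ} (h0 : 0 < t) (h1 : t < 1)
    (h : pgf n g t = 0) : ∀ x, g x = false := by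
  intro x
  have hnn : ∀ y ∈ (Finset.univ : Finset (Fin n → Bool)),
      0 ≤ if g y then t ^ cnt y * (1 - t) ^ (n - cnt y) else 0 := by
    intro y _
    split
    · exact le_of_lt (w_pos h0 h1 _ _)
    · exact le_refl 0
  have h2 := (Finset.sum_eq_zero_iff_of_nonneg hnn).mp h x (Finset.mem_univ x)
  by_contra hc
  rw [Bool.not_eq_false] at hc
  rw [if_pos hc] at h2
  exact absurd h2 (ne_of_gt (w_pos h0 h1 _ _))

lemma pgf_eq_one {n : ℕ} {g : (Fin n → Bool) → Bool} {t : ℝ} (h0 : 0 < t) (h1 : t < 1)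
    (h : pgf n g t = 1) : ∀ x, g x = true := by
  have h' : ∑ x : Fin n → Bool,
      (if g x = false then t ^ cnt x * (1 - t) ^ (n - cnt x) else 0) = 0 := by
    rw [← one_sub_pgf, h]; ring
  intro x
  have hnn : ∀ y ∈ (Finset.univ : Finset (Fin n → Bool)),
      (0:ℝ) ≤ if g y = false then t ^ cnt y * (1 - t) ^ (n - cnt y) else 0 := by
    intro y _
    split
    · exact le_of_lt (w_pos h0 h1 _ _)
    · exact le_refl 0
  have h2 := (Finset.sum_eq_zero_iff_of_nonneg hnn).mp h' x (Finset.mem_univ x)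
  by_contra hc
  rw [Bool.not_eq_true] at hc
  rw [if_pos hc] at h2
  exact absurd h2 (ne_of_gt (w_pos h0 h1 _ _))

lemma pgf_pos {n : ℕ} {g : (Fin n → Bool) → Bool} {t : ℝ} (h0 : 0 < t) (h1 : t < 1)
    (hg : g (fun _ => true) = true) : 0 < pgf n g t := by
  have h := Finset.single_le_sum (f := fun x : Fin n → Bool =>
      if g x then t ^ cnt x * (1 - t) ^ (n - cnt x) else 0)
    (fun y _ => by
      split
      · exact le_of_lt (w_pos h0 h1 _ _)
      · exact le_refl 0)
    (Finset.mem_univ (fun _ : Fin n => true))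
  rw [if_pos hg] at h
  exact lt_of_lt_of_le (w_pos h0 h1 _ _) h

lemma pgf_lt_one {n : ℕ} {g : (Fin n → Bool) → Bool} {t : ℝ} (h0 : 0 < t) (h1 : t < 1)
    (hg : g (fun _ => false) = false) : pgf n g t < 1 := by
  have key : 0 < 1 - pgf n g t := by
    rw [one_sub_pgf]
    have h := Finset.single_le_sum (f := fun x : Fin n → Bool =>
        if g x = false then t ^ cnt x * (1 - t) ^ (n - cnt x) else 0)
      (fun y _ => by
        split
        · exact le_of_lt (w_pos h0 h1 _ _)
        · exact le_refl 0)
      (Finset.mem_univ (fun _ : Fin n => false))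
    rw [if_pos hg] at h
    exact lt_of_lt_of_le (w_pos h0 h1 _ _) h
  linarith

def BMono {n : ℕ} (g : (Fin n → Bool) → Bool) : Prop :=
  ∀ x y : Fin n → Bool, (∀ i, x i = true → y i = true) → g x = true → g y = true

lemma pgf_core : ∀ (n : ℕ) (g : (Fin n → Bool) → Bool), BMono g → ∀ t : ℝ, 0 < t → t < 1 →
    ∃ d : ℝ, HasDerivAt (pgf n g) d t ∧
      pgf n g t * (1 - pgf n g t) ≤ t * (1 - t) * d ∧
      (pgf n g t * (1 - pgf n g t) = t * (1 - t) * d →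
        (∀ x, g x = false) ∨ (∀ x, g x = true) ∨ ∃ i, ∀ x, g x = x i) := by
  intro n
  induction n with
  | zero =>
    intro g _ t ht0 ht1
    have he : pgf 0 g = fun _ : ℝ => (if g (fun i => i.elim0) then (1:ℝ) else 0) := by
      funext s
      unfold pgf
      rw [Fintype.sum_subsingleton (a := fun i : Fin 0 => i.elim0)]
      simp [cnt]
    have hx0 : ∀ x : Fin 0 → Bool, x = fun i => i.elim0 := fun x => funext fun i => i.elim0
    refine ⟨0, ?_, ?_, ?_⟩
    · rw [he]; exact hasDerivAt_const t _
    · rw [he]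
      cases hgv : g (fun i => i.elim0) <;> simp
    · intro _
      cases hgv : g (fun i => i.elim0)
      · exact Or.inl fun x => by rw [hx0 x]; exact hgv
      · exact Or.inr (Or.inl fun x => by rw [hx0 x]; exact hgv)
  | succ m ih =>
    intro g hg t ht0 ht1
    have h1t : (0:ℝ) < 1 - t := by linarith
    set g0 : (Fin m → Bool) → Bool := fun y => g (Fin.cons false y) with hg0def
    set g1 : (Fin m → Bool) → Bool := fun y => g (Fin.cons true y) with hg1def
    have hm0 : BMono g0 := by
      intro x y hxy hx
      refine hg _ _ ?_ hx
      intro i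
      refine Fin.cases ?_ (fun j => ?_) i
      · simp
      · simp only [Fin.cons_succ]; exact hxy j
    have hm1 : BMono g1 := by
      intro x y hxy hx
      refine hg _ _ ?_ hx
      intro i
      refine Fin.cases ?_ (fun j => ?_) i
      · simp
      · simp only [Fin.cons_succ]; exact hxy j
    have h01 : ∀ y, g0 y = true → g1 y = true := by
      intro y h
      refine hg _ _ ?_ h
      intro i
      refine Fin.cases ?_ (fun j => ?_) i
      · simp
      · simp only [Fin.cons_succ]; exact fun h => h
    obtain ⟨d0, hd0, hi0, he0⟩ := ih g0 hm0 t ht0 ht1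
    obtain ⟨d1, hd1, hi1, he1⟩ := ih g1 hm1 t ht0 ht1
    set h0 := pgf m g0 t with hh0
    set h1 := pgf m g1 t with hh1
    have hfe : pgf (m+1) g = fun s => (1 - s) * pgf m g0 s + s * pgf m g1 s := by
      funext s; exact pgf_cons m g s
    have hval : pgf (m+1) g t = (1 - t) * h0 + t * h1 := pgf_cons m g t
    have h0nn : 0 ≤ h0 := by rw [hh0]; exact pgf_nonneg g0 ht0.le ht1.le
    have h1nn : 0 ≤ h1 := by rw [hh1]; exact pgf_nonneg g1 ht0.le ht1.le
    have h0le : h0 ≤ 1 := by rw [hh0]; exact pgf_le_one g0 ht0.le ht1.le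
    have h1le : h1 ≤ 1 := by rw [hh1]; exact pgf_le_one g1 ht0.le ht1.le
    have h01le : h0 ≤ h1 := by rw [hh0, hh1]; exact pgf_mono h01 ht0.le ht1.le
    have key : t * (1 - t) * ((0 - 1) * h0 + (1 - t) * d0 + (1 * h1 + t * d1))
        - ((1-t)*h0 + t*h1) * (1 - ((1-t)*h0 + t*h1))
        = (1 - t) * (t * (1 - t) * d0 - h0 * (1 - h0))
          + t * (t * (1 - t) * d1 - h1 * (1 - h1))
          + t * (1 - t) * ((h1 - h0) * (1 - (h1 - h0))) := by ring
    have hA' : 0 ≤ (1 - t) * (t * (1 - t) * d0 - h0 * (1 - h0)) :=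
      mul_nonneg h1t.le (by linarith)
    have hB' : 0 ≤ t * (t * (1 - t) * d1 - h1 * (1 - h1)) :=
      mul_nonneg ht0.le (by linarith)
    have hCnn : 0 ≤ (h1 - h0) * (1 - (h1 - h0)) :=
      mul_nonneg (by linarith) (by linarith)
    have hC' : 0 ≤ t * (1 - t) * ((h1 - h0) * (1 - (h1 - h0))) :=
      mul_nonneg (mul_nonneg ht0.le h1t.le) hCnn
    refine ⟨(0 - 1) * h0 + (1 - t) * d0 + (1 * h1 + t * d1), ?_, ?_, ?_⟩
    · rw [hfe]
      exact (((hasDerivAt_const t (1:ℝ)).sub (hasDerivAt_id t)).mul hd0).add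
        ((hasDerivAt_id t).mul hd1)
    · rw [hval]
      linarith [key, hA', hB', hC']
    · intro heq
      rw [hval] at heq
      have hA0 : t * (1 - t) * d0 = h0 * (1 - h0) := by
        have hz : (1 - t) * (t * (1 - t) * d0 - h0 * (1 - h0)) = 0 := by linarith
        have h2 := (mul_eq_zero.mp hz).resolve_left (ne_of_gt h1t)
        linarith
      have hB0 : t * (1 - t) * d1 = h1 * (1 - h1) := by
        have hz : t * (t * (1 - t) * d1 - h1 * (1 - h1)) = 0 := by linarith
        have h2 := (mul_eq_zero.mp hz).resolve_left (ne_of_gt ht0)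
        linarith
      have hC0 : (h1 - h0) * (1 - (h1 - h0)) = 0 := by
        have hz : t * (1 - t) * ((h1 - h0) * (1 - (h1 - h0))) = 0 := by linarith
        exact (mul_eq_zero.mp hz).resolve_left (ne_of_gt (mul_pos ht0 h1t))
      have decomp : ∀ x : Fin (m+1) → Bool, g x = g (Fin.cons (x 0) (Fin.tail x)) := by
        intro x; rw [Fin.cons_self_tail]
      rcases mul_eq_zero.mp hC0 with hq | hq
      · have hq' : h1 = h0 := by linarith
        rcases he0 hA0.symm with c0 | c0 | ⟨i, c0⟩
        · have hz0 : pgf m g0 t = 0 := Finset.sum_eq_zero fun y _ => by rw [c0 y]; simp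
          have hz1 : pgf m g1 t = 0 := by rw [← hh1, hq', hh0]; exact hz0
          have c1 := pgf_eq_zero ht0 ht1 hz1
          refine Or.inl fun x => ?_
          rw [decomp x]
          cases hb : x 0
          · exact c0 (Fin.tail x)
          · exact c1 (Fin.tail x)
        · have hz0 : pgf m g0 t = 1 := by
            rw [show g0 = fun _ => true from funext c0]; exact pgf_true m t
          have hz1 : pgf m g1 t = 1 := by rw [← hh1, hq', hh0]; exact hz0
          have c1 := pgf_eq_one ht0 ht1 hz1
          refine Or.inr (Or.inl fun x => ?_)
          rw [decomp x]
          cases hb : x 0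
          · exact c0 (Fin.tail x)
          · exact c1 (Fin.tail x)
        · rcases he1 hB0.symm with c1 | c1 | ⟨j, c1⟩
          · exfalso
            have htt : g0 (fun _ => true) = true := c0 _
            have h2 := h01 _ htt
            rw [c1 (fun _ => true)] at h2
            exact Bool.false_ne_true h2
          · exfalso
            have hz1 : pgf m g1 t = 1 := by
              rw [show g1 = fun _ => true from funext c1]; exact pgf_true m t
            have hlt : pgf m g0 t < 1 := pgf_lt_one ht0 ht1 (c0 _)
            rw [← hh0] at hlt
            rw [← hh1] at hz1
            linarith
          · have hji : j = i := by
              have hg0e : g0 (fun k => decide (k = i)) = true := by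
                rw [c0]; simp
              have hg1e := h01 _ hg0e
              rw [c1] at hg1e
              exact of_decide_eq_true hg1e
            subst hji
            refine Or.inr (Or.inr ⟨j.succ, fun x => ?_⟩)
            rw [decomp x]
            cases hb : x 0
            · exact c0 (Fin.tail x)
            · exact c1 (Fin.tail x)
      · have hz0 : pgf m g0 t = 0 := by rw [← hh0]; linarith
        have hz1 : pgf m g1 t = 1 := by rw [← hh1]; linarith
        have c0 := pgf_eq_zero ht0 ht1 hz0
        have c1 := pgf_eq_one ht0 ht1 hz1
        refine Or.inr (Or.inr ⟨0, fun x => ?_⟩)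
        rw [decomp x]
        cases hb : x 0
        · exact c0 (Fin.tail x)
        · exact c1 (Fin.tail x)

lemma pgf_core_strict {n : ℕ} {g : (Fin n → Bool) → Bool} (hg : BMono g)
    (hgt : g (fun _ => true) = true) (hgf : g (fun _ => false) = false)
    (hnd : ∀ i, ¬ (∀ x, g x = x i)) {t : ℝ} (ht0 : 0 < t) (ht1 : t < 1) :
    ∃ d : ℝ, HasDerivAt (pgf n g) d t ∧
      pgf n g t * (1 - pgf n g t) < t * (1 - t) * d := by
  obtain ⟨d, hd, hle, heq⟩ := pgf_core n g hg t ht0 ht1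
  refine ⟨d, hd, lt_of_le_of_ne hle fun h => ?_⟩
  rcases heq h with c | c | ⟨i, c⟩
  · exact Bool.false_ne_true ((c _).symm.trans hgt)
  · exact Bool.false_ne_true ((c _).symm.trans hgf).symm
  · exact hnd i c

lemma pgf_logit_mono {n : ℕ} {g : (Fin n → Bool) → Bool} (hg : BMono g)
    (hgt : g (fun _ => true) = true) (hgf : g (fun _ => false) = false)
    (hnd : ∀ i, ¬ (∀ x, g x = x i)) :
    StrictMonoOn (fun s => Real.log (pgf n g s) - Real.log (1 - pgf n g s)
      - Real.log s + Real.log (1 - s)) (Set.Ioo (0:ℝ) 1) := by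
  have hds : ∀ s ∈ Set.Ioo (0:ℝ) 1, ∃ du,
      HasDerivAt (fun s => Real.log (pgf n g s) - Real.log (1 - pgf n g s)
        - Real.log s + Real.log (1 - s)) du s ∧ 0 < du := by
    rintro s ⟨hs0, hs1⟩
    obtain ⟨d, hd, hlt⟩ := pgf_core_strict hg hgt hgf hnd hs0 hs1
    have hp0 : 0 < pgf n g s := pgf_pos hs0 hs1 hgt
    have hp1 : pgf n g s < 1 := pgf_lt_one hs0 hs1 hgf
    have D1 : HasDerivAt (fun s => Real.log (pgf n g s)) (d / pgf n g s) s :=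
      hd.log (ne_of_gt hp0)
    have D2 : HasDerivAt (fun s => Real.log (1 - pgf n g s)) ((0 - d) / (1 - pgf n g s)) s :=
      ((hasDerivAt_const s (1:ℝ)).sub hd).log (by intro hzero; simp only [Pi.sub_apply] at hzero; linarith)
    have D3 : HasDerivAt Real.log s⁻¹ s := Real.hasDerivAt_log (ne_of_gt hs0)
    have D4 : HasDerivAt (fun s : ℝ => Real.log (1 - s)) ((0 - 1) / (1 - s)) s :=
      ((hasDerivAt_const s (1:ℝ)).sub (hasDerivAt_id s)).log (by intro hzero; simp only [Pi.sub_apply, id_eq] at hzero; linarith)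
    refine ⟨_, ((D1.sub D2).sub D3).add D4, ?_⟩
    have e1 : pgf n g s ≠ 0 := ne_of_gt hp0
    have e2 : (1:ℝ) - pgf n g s ≠ 0 := by intro h; linarith
    have e3 : s ≠ 0 := ne_of_gt hs0
    have e4 : (1:ℝ) - s ≠ 0 := by intro h; linarith
    have hval : d / pgf n g s - (0 - d) / (1 - pgf n g s) - s⁻¹ + (0 - 1) / (1 - s)
        = (s * (1 - s) * d - pgf n g s * (1 - pgf n g s))
          / (pgf n g s * (1 - pgf n g s) * (s * (1 - s))) := by
      field_simp
      ring
    rw [hval]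
    exact div_pos (by linarith)
      (mul_pos (mul_pos hp0 (by linarith)) (mul_pos hs0 (by linarith)))
  refine strictMonoOn_of_deriv_pos (convex_Ioo 0 1) ?_ ?_
  · intro s hs
    obtain ⟨du, hdu, _⟩ := hds s hs
    exact hdu.continuousAt.continuousWithinAt
  · intro s hs
    rw [interior_Ioo] at hs
    obtain ⟨du, hdu, hpos⟩ := hds s hs
    rw [hdu.deriv]
    exact hpos

def sgf {n : ℕ} (S : Finset (Finset (Fin n))) : (Fin n → Bool) → Bool :=
  fun x => decide (∀ A ∈ S, ∃ i ∈ A, x i = true)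

lemma sgf_true_iff {n : ℕ} (S : Finset (Finset (Fin n))) (x : Fin n → Bool) :
    sgf S x = true ↔ ∀ A ∈ S, ∃ i ∈ A, x i = true := by
  simp [sgf]

lemma spernerStat_zero_iff {n : ℕ} (S : Finset (Finset (Fin n))) (hS : S.Nonempty)
    (hne : ∀ A ∈ S, A.Nonempty) (ε : Fin n → Bool) :
    spernerStat S hS hne (fun i => if ε i then 1 else 0) = 0 ↔
      ∀ A ∈ S, ∃ i ∈ A, ε i = false := by
  unfold spernerStat
  have hF0 : ∀ (B : Finset (Fin n)) (hB : B ∈ S),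
      0 ≤ B.inf' (hne B hB) (fun i => if ε i then (1:ℝ) else 0) := by
    intro B hB
    refine Finset.le_inf' _ _ fun i _ => ?_
    split
    · norm_num
    · exact le_refl 0
  constructor
  · intro h A hA
    have hattach : (⟨A, hA⟩ : {B // B ∈ S}) ∈ S.attach := Finset.mem_attach _ _
    have hle : A.inf' (hne A hA) (fun i => if ε i then (1:ℝ) else 0) ≤ 0 :=
      le_trans (Finset.le_sup'
        (fun A : {B // B ∈ S} => A.1.inf' (hne A.1 A.2) (fun i => if ε i then (1:ℝ) else 0))
        hattach) (le_of_eq h)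
    obtain ⟨i, hiA, hieq⟩ :=
      Finset.exists_mem_eq_inf' (hne A hA) (fun i => if ε i then (1:ℝ) else 0)
    rw [hieq] at hle
    by_cases hb : ε i = true
    · rw [if_pos hb] at hle; linarith
    · exact ⟨i, hiA, by simpa using hb⟩
  · intro h
    apply le_antisymm
    · refine Finset.sup'_le _ _ fun B _ => ?_
      obtain ⟨i, hiA, hif⟩ := h B.1 B.2
      refine le_trans (Finset.inf'_le _ hiA) ?_
      rw [hif]
      norm_num
    · obtain ⟨A0, hA0⟩ := hS
      exact le_trans (hF0 A0 hA0)
        (Finset.le_sup'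
          (fun A : {B // B ∈ S} => A.1.inf' (hne A.1 A.2) (fun i => if ε i then (1:ℝ) else 0))
          (Finset.mem_attach _ (⟨A0, hA0⟩ : {B // B ∈ S})))

lemma spernerModule_eq_pgf {n : ℕ} (S : Finset (Finset (Fin n))) (hS : S.Nonempty)
    (hne : ∀ A ∈ S, A.Nonempty) : spernerModule S hS hne = pgf n (sgf S) := by
  classical
  funext t
  unfold spernerModule
  have hinv : Function.Involutive (fun x : Fin n → Bool => fun i => !(x i)) := by
    intro x; funext i; simp
  rw [← Equiv.sum_comp (Function.Involutive.toPerm _ hinv)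
    (fun ε : Fin n → Bool =>
      if spernerStat S hS hne (fun i => if ε i then 1 else 0) = 0 then
        t ^ (Finset.univ.filter fun i => ε i = false).card *
          (1 - t) ^ (n - (Finset.univ.filter fun i => ε i = false).card)
      else 0)]
  unfold pgf
  refine Finset.sum_congr rfl fun x _ => ?_
  have he : (Function.Involutive.toPerm _ hinv) x = fun i => !(x i) := rfl
  beta_reduce
  rw [he]
  have hc : (Finset.univ.filter fun i => (!(x i)) = false).card = cnt x := by
    unfold cnt
    congr 1
    apply Finset.filter_congr
    intro i _
    simp
  have hiff : (spernerStat S hS hne (fun i => if (!(x i)) then 1 else 0) = 0) ↔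
      (sgf S x = true) := by
    rw [spernerStat_zero_iff S hS hne (fun i => !(x i)), sgf_true_iff]
    simp
  rw [if_congr hiff (by rw [hc]) rfl]

section sgfprops
variable {n : ℕ} (S : Finset (Finset (Fin n)))

lemma sgf_mono : BMono (sgf S) := by
  intro x y hxy hx
  rw [sgf_true_iff] at hx ⊢
  intro A hA
  obtain ⟨i, hiA, hxi⟩ := hx A hA
  exact ⟨i, hiA, hxy i hxi⟩

lemma sgf_alltrue (hne : ∀ A ∈ S, A.Nonempty) : sgf S (fun _ => true) = true := by
  rw [sgf_true_iff]
  intro A hA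
  obtain ⟨i, hi⟩ := hne A hA
  exact ⟨i, hi, rfl⟩

lemma sgf_allfalse (hS : S.Nonempty) : sgf S (fun _ => false) = false := by
  obtain ⟨A, hA⟩ := hS
  by_contra h
  rw [Bool.not_eq_false, sgf_true_iff] at h
  obtain ⟨i, _, hfi⟩ := h A hA
  exact Bool.false_ne_true hfi

lemma sgf_notall (hS : S.Nonempty) (hint : S.inf' hS id = ∅) :
    ∀ i : Fin n, ¬ ∀ A ∈ S, i ∈ A := by
  intro i hi
  have hsub : ({i} : Finset (Fin n)) ≤ S.inf' hS id :=
    Finset.le_inf' hS id fun A hA => Finset.singleton_subset_iff.mpr (hi A hA)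
  rw [hint] at hsub
  exact absurd (hsub (Finset.mem_singleton_self i)) (Finset.notMem_empty i)

lemma sgf_nodict (hS : S.Nonempty) (hint : S.inf' hS id = ∅) :
    ∀ i : Fin n, ¬ ∀ x, sgf S x = x i := by
  intro i hdict
  apply sgf_notall S hS hint i
  intro A hA
  have h1 : sgf S (fun k => decide (k = i)) = true := by rw [hdict]; simp
  rw [sgf_true_iff] at h1
  obtain ⟨k, hk, hkeq⟩ := h1 A hA
  have : k = i := of_decide_eq_true hkeq
  subst this
  exact hk

lemma sgf_cnt_ge (hS : S.Nonempty) (hint : S.inf' hS id = ∅) :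
    ∀ x, sgf S x = true → 2 ≤ cnt x := by
  intro x hx
  by_contra hlt
  push_neg at hlt
  rcases (by omega : cnt x = 0 ∨ cnt x = 1) with h0 | h1
  · have hfil : (Finset.univ.filter fun i => x i = true) = ∅ := Finset.card_eq_zero.mp h0
    have hxf : x = fun _ => false := by
      funext i
      by_contra hc
      rw [Bool.not_eq_false] at hc
      have : i ∈ Finset.univ.filter fun i => x i = true :=
        Finset.mem_filter.mpr ⟨Finset.mem_univ i, hc⟩
      rw [hfil] at this
      exact absurd this (Finset.notMem_empty i)
    rw [hxf] at hx
    exact Bool.false_ne_true ((sgf_allfalse S hS).symm.trans hx)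
  · obtain ⟨i, hfil⟩ := Finset.card_eq_one.mp h1
    apply sgf_notall S hS hint i
    intro A hA
    rw [sgf_true_iff] at hx
    obtain ⟨k, hk, hxk⟩ := hx A hA
    have : k ∈ Finset.univ.filter fun j => x j = true :=
      Finset.mem_filter.mpr ⟨Finset.mem_univ k, hxk⟩
    rw [hfil, Finset.mem_singleton] at this
    subst this
    exact hk

lemma sgf_zcnt_ge (hcard : ∀ A ∈ S, 2 ≤ A.card) :
    ∀ x, sgf S x = false → 2 ≤ n - cnt x := by
  classical
  intro x hx
  rw [← Bool.not_eq_true, sgf_true_iff] at hx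
  push_neg at hx
  obtain ⟨A, hA, hAf⟩ := hx
  have hsub : A ⊆ Finset.univ.filter fun i => x i = false := by
    intro i hi
    refine Finset.mem_filter.mpr ⟨Finset.mem_univ i, ?_⟩
    simpa using hAf i hi
  have hcards : 2 ≤ (Finset.univ.filter fun i => x i = false).card :=
    le_trans (hcard A hA) (Finset.card_le_card hsub)
  have hfeq : (Finset.univ.filter fun i => ¬ x i = true)
      = (Finset.univ.filter fun i => x i = false) := by
    apply Finset.filter_congr
    intro i _
    simp
  have hsplit : (Finset.univ.filter fun i => x i = true).card
      + (Finset.univ.filter fun i => ¬ x i = true).card = n := by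
    rw [Finset.card_filter_add_card_filter_not]
    simp
  rw [hfeq] at hsplit
  unfold cnt
  omega

lemma pgf_near_zero (hS : S.Nonempty) (hint : S.inf' hS id = ∅) {t : ℝ}
    (h0 : 0 ≤ t) (h1 : t ≤ 1) : pgf n (sgf S) t ≤ 2^n * t^2 := by
  have hterm : ∀ x : Fin n → Bool,
      (if sgf S x then t ^ cnt x * (1 - t) ^ (n - cnt x) else 0) ≤ t^2 := by
    intro x
    by_cases hx : sgf S x = true
    · rw [if_pos hx]
      have h2 := sgf_cnt_ge S hS hint x hx
      calc t ^ cnt x * (1 - t) ^ (n - cnt x)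
          ≤ t ^ 2 * 1 := by
            apply mul_le_mul
            · exact pow_le_pow_of_le_one h0 h1 h2
            · exact pow_le_one₀ (by linarith) (by linarith)
            · exact pow_nonneg (by linarith) _
            · exact pow_nonneg h0 _
        _ = t ^ 2 := mul_one _
    · rw [if_neg hx]
      positivity
  calc pgf n (sgf S) t ≤ ∑ _x : Fin n → Bool, t^2 := Finset.sum_le_sum fun x _ => hterm x
    _ = 2^n * t^2 := by
      rw [Finset.sum_const, Finset.card_univ]
      simp [nsmul_eq_mul]

lemma pgf_near_one (hcard : ∀ A ∈ S, 2 ≤ A.card) {t : ℝ}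
    (h0 : 0 ≤ t) (h1 : t ≤ 1) : 1 - pgf n (sgf S) t ≤ 2^n * (1-t)^2 := by
  rw [one_sub_pgf]
  have hterm : ∀ x : Fin n → Bool,
      (if sgf S x = false then t ^ cnt x * (1 - t) ^ (n - cnt x) else 0) ≤ (1-t)^2 := by
    intro x
    by_cases hx : sgf S x = false
    · rw [if_pos hx]
      have h2 := sgf_zcnt_ge S hcard x hx
      calc t ^ cnt x * (1 - t) ^ (n - cnt x)
          ≤ 1 * (1 - t) ^ 2 := by
            apply mul_le_mul
            · exact pow_le_one₀ h0 h1
            · exact pow_le_pow_of_le_one (by linarith) (by linarith) h2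
            · exact pow_nonneg (by linarith) _
            · norm_num
        _ = (1 - t) ^ 2 := one_mul _
    · rw [if_neg hx]
      positivity
  calc (∑ x : Fin n → Bool, if sgf S x = false then t ^ cnt x * (1 - t) ^ (n - cnt x) else 0)
      ≤ ∑ _x : Fin n → Bool, (1-t)^2 := Finset.sum_le_sum fun x _ => hterm x
    _ = 2^n * (1-t)^2 := by
      rw [Finset.sum_const, Finset.card_univ]
      simp [nsmul_eq_mul]

end sgfprops

/-- If a Sperner family has at least two members, every member has at least two elements,
and the members have empty common intersection, then its module has exactly one fixed
point `ω ∈ (0,1)`, which is repellent: `h_S′(ω) > 1`. -/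
theorem sperner_module_unique_repellent_fixed_point
    (n : ℕ) (hn : 1 ≤ n) (S : Finset (Finset (Fin n))) (hS : S.Nonempty)
    (hne : ∀ A ∈ S, A.Nonempty) (hsp : ∀ A ∈ S, ∀ B ∈ S, A ⊆ B → A = B)
    (hk : 2 ≤ S.card) (hcard : ∀ A ∈ S, 2 ≤ A.card) (hint : S.inf' hS id = ∅) :
    ∃ ω ∈ Set.Ioo (0 : ℝ) 1, spernerModule S hS hne ω = ω ∧
      1 < deriv (spernerModule S hS hne) ω ∧
      ∀ ω' ∈ Set.Ioo (0 : ℝ) 1, spernerModule S hS hne ω' = ω' → ω' = ω := by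
  classical
  rw [spernerModule_eq_pgf S hS hne]
  have hgmono : BMono (sgf S) := sgf_mono S
  have hgt : sgf S (fun _ => true) = true := sgf_alltrue S hne
  have hgf : sgf S (fun _ => false) = false := sgf_allfalse S hS
  have hnd : ∀ i, ¬ ∀ x, sgf S x = x i := sgf_nodict S hS hint
  -- choice of endpoints
  set δ : ℝ := 1 / 2 ^ (n + 1) with hδdef
  have hδ0 : 0 < δ := by positivity
  have h2n : (2:ℝ) ^ n * δ = 1 / 2 := by
    rw [hδdef, pow_succ]
    field_simp
  have hδ4 : δ ≤ 1 / 4 := by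
    rw [hδdef]
    have h4 : (4:ℝ) ≤ 2 ^ (n + 1) := by
      calc (4:ℝ) = 2 ^ 2 := by norm_num
        _ ≤ 2 ^ (n + 1) := by
          apply pow_le_pow_right₀ (by norm_num)
          omega
    rw [div_le_div_iff₀ (by positivity) (by norm_num)]
    linarith
  have ht00 : (0:ℝ) < δ := hδ0
  have ht01 : δ < 1 - δ := by linarith
  have ht11 : 1 - δ < 1 := by linarith
  -- φ values at endpoints
  have hφ0 : pgf n (sgf S) δ - δ < 0 := by
    have hb := pgf_near_zero S hS hint (le_of_lt hδ0) (by linarith)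
    have : (2:ℝ)^n * δ^2 = (1/2) * δ := by rw [← h2n]; ring
    nlinarith
  have hφ1 : 0 < pgf n (sgf S) (1 - δ) - (1 - δ) := by
    have hb := pgf_near_one S hcard (t := 1 - δ) (by linarith) (by linarith)
    have he : (1:ℝ) - (1 - δ) = δ := by ring
    rw [he] at hb
    have : (2:ℝ)^n * δ^2 = (1/2) * δ := by rw [← h2n]; ring
    nlinarith
  -- continuity on [δ, 1-δ]
  have hsubset : Set.Icc δ (1 - δ) ⊆ Set.Ioo (0:ℝ) 1 := by
    rintro s ⟨hs1, hs2⟩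
    exact ⟨lt_of_lt_of_le hδ0 hs1, lt_of_le_of_lt hs2 ht11⟩
  have hcont : ContinuousOn (fun s => pgf n (sgf S) s - s) (Set.Icc δ (1 - δ)) := by
    intro s hs
    obtain ⟨hs0, hs1⟩ := hsubset hs
    obtain ⟨d, hd, _⟩ := pgf_core_strict hgmono hgt hgf hnd hs0 hs1
    exact ((hd.sub (hasDerivAt_id s)).continuousAt).continuousWithinAt
  -- IVT
  have hIVT := intermediate_value_Ioo (le_of_lt ht01) hcont
  have h0mem : (0:ℝ) ∈ Set.Ioo (pgf n (sgf S) δ - δ) (pgf n (sgf S) (1 - δ) - (1 - δ)) :=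
    ⟨hφ0, hφ1⟩
  obtain ⟨ω, hωI, hφω⟩ := hIVT h0mem
  have hωmem : ω ∈ Set.Ioo (0:ℝ) 1 :=
    ⟨lt_trans hδ0 hωI.1, lt_trans hωI.2 ht11⟩
  have hfix : pgf n (sgf S) ω = ω := by
    have : pgf n (sgf S) ω - ω = 0 := hφω
    linarith
  obtain ⟨hω0, hω1⟩ := hωmem
  -- repellence
  obtain ⟨d, hd, hstrict⟩ := pgf_core_strict hgmono hgt hgf hnd hω0 hω1
  have hωprod : 0 < ω * (1 - ω) := mul_pos hω0 (by linarith)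
  have hd1 : 1 < d := by
    rw [hfix] at hstrict
    nlinarith
  -- uniqueness via strict monotonicity of the logit difference
  have hu := pgf_logit_mono hgmono hgt hgf hnd
  have huzero : ∀ ω' ∈ Set.Ioo (0:ℝ) 1, pgf n (sgf S) ω' = ω' →
      (fun s => Real.log (pgf n (sgf S) s) - Real.log (1 - pgf n (sgf S) s)
        - Real.log s + Real.log (1 - s)) ω' = 0 := by
    intro ω' _ hfix'
    simp only
    rw [hfix']
    ring
  refine ⟨ω, ⟨hω0, hω1⟩, hfix, ?_, ?_⟩
  · rw [hd.deriv]
    exact hd1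
  · intro ω' hω'mem hfix'
    have h1 := huzero ω' hω'mem hfix'
    have h2 := huzero ω ⟨hω0, hω1⟩ hfix
    exact hu.injOn hω'mem ⟨hω0, hω1⟩ (h1.trans h2.symm)
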